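/- Define the generating function F(t) = (1+q)(1 + 5q − q² − q³ − (1−q)√((1−q²)(1−4q−q²)))/(8q), where q = q(t) = (1−2t−√(1−4t))/(2t). Then the first coefficients of the power series expansion of F at t = 0 are 1, 1, 2, 6, 24, 114, 592, 3216, 17904, i.e., F(t) = 1 + t + 2t² + 6t³ + 24t⁴ + 114t⁵ + 592t⁶ + 3216t⁷ + 17904t⁸ + O(t⁹). -/

import Mathlib

open Filter Asymptotics Real

noncomputable def ll : Filter ℝ := nhdsWithin 0 {(0:ℝ)}ᶜ

def OK (f p : ℝ → ℝ) : Prop := (fun t => f t - p t) =O[ll] fun t => t ^ 9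

lemma ll_le : ll ≤ nhds 0 := nhdsWithin_le_nhds

lemma contO (u : ℝ → ℝ) (hu : Continuous u) : u =O[ll] (fun _ => (1:ℝ)) :=
  (((hu.tendsto 0)).mono_left ll_le).isBigO_one ℝ

lemma t9_tendsto : Filter.Tendsto (fun t : ℝ => t ^ 9) ll (nhds 0) := by
  have : Filter.Tendsto (fun t : ℝ => t ^ 9) (nhds 0) (nhds 0) := by
    simpa using (continuous_pow 9).tendsto (0 : ℝ)
  exact this.mono_left ll_le

lemma OK.tendsto {f p : ℝ → ℝ} (h : OK f p) (hp : Continuous p) :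
    Filter.Tendsto f ll (nhds (p 0)) := by
  have h1 : Filter.Tendsto (fun t => f t - p t) ll (nhds 0) :=
    h.trans_tendsto t9_tendsto
  have h2 : Filter.Tendsto p ll (nhds (p 0)) := (hp.tendsto 0).mono_left ll_le
  simpa using h1.add h2

lemma OK.bigO_one {f p : ℝ → ℝ} (h : OK f p) (hp : Continuous p) :
    f =O[ll] (fun _ => (1:ℝ)) := (h.tendsto hp).isBigO_one ℝ

lemma OK_poly (p : ℝ → ℝ) : OK p p := by
  unfold OK; simpa using isBigO_zero _ _

lemma OK_add {f p g q : ℝ → ℝ} (hf : OK f p) (hg : OK g q) :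
    OK (fun t => f t + g t) (fun t => p t + q t) := by
  have := hf.add hg
  unfold OK; exact this.congr_left (fun t => by ring)

lemma OK_sub {f p g q : ℝ → ℝ} (hf : OK f p) (hg : OK g q) :
    OK (fun t => f t - g t) (fun t => p t - q t) := by
  have := hf.sub hg
  unfold OK; exact this.congr_left (fun t => by ring)

lemma OK_congr {f p p' u : ℝ → ℝ} (h : OK f p) (hu : Continuous u)
    (he : ∀ t, p t = p' t + t ^ 9 * u t) : OK f p' := by
  unfold OK
  have h2 : (fun t : ℝ => t ^ 9 * u t) =O[ll] (fun t => t ^ 9) := by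
    simpa using (isBigO_refl (fun t : ℝ => t ^ 9) ll).mul (contO u hu)
  have := h.add h2
  exact this.congr_left (fun t => by rw [he t]; ring)

lemma OK_fcongr {f g p : ℝ → ℝ} (h : OK g p) (he : ∀ᶠ t in ll, f t = g t) : OK f p := by
  unfold OK
  exact h.congr' (by filter_upwards [he] with t ht; rw [ht]) (EventuallyEq.refl _ _)

lemma OK_mul {f p g q r u : ℝ → ℝ} (hf : OK f p) (hg : OK g q)
    (hp : Continuous p) (hq : Continuous q) (hu : Continuous u)
    (he : ∀ t, p t * q t = r t + t ^ 9 * u t) :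
    OK (fun t => f t * g t) r := by
  have h1 : (fun t => f t * g t - p t * q t) =O[ll] fun t => t ^ 9 := by
    have e : ∀ t, f t * g t - p t * q t = f t * (g t - q t) + q t * (f t - p t) :=
      fun t => by ring
    have b1 : (fun t => f t * (g t - q t)) =O[ll] fun t => t ^ 9 := by
      simpa using (hf.bigO_one hp).mul hg
    have b2 : (fun t => q t * (f t - p t)) =O[ll] fun t => t ^ 9 := by
      simpa using (contO q hq).mul hf
    exact ((b1.add b2).congr_left (fun t => (e t).symm))
  exact OK_congr (p := fun t => p t * q t) h1 hu he

lemma OK_inv {f p r u : ℝ → ℝ} (hf : OK f p) (hp : Continuous p) (hp0 : p 0 ≠ 0)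
    (hr : Continuous r) (hu : Continuous u)
    (he : ∀ t, p t * r t = 1 + t ^ 9 * u t) :
    OK (fun t => (f t)⁻¹) r := by
  have htf : Filter.Tendsto f ll (nhds (p 0)) := hf.tendsto hp
  have hne : ∀ᶠ t in ll, f t ≠ 0 := htf.eventually_ne hp0
  have hinv : Filter.Tendsto (fun t => (f t)⁻¹) ll (nhds (p 0)⁻¹) := htf.inv₀ hp0
  have key : (fun t => 1 - f t * r t) =O[ll] fun t => t ^ 9 := by
    have e : ∀ t, 1 - f t * r t = -(t ^ 9 * u t) - r t * (f t - p t) := fun t => by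
      have := he t; nlinarith [he t]
    have b1 : (fun t : ℝ => -(t ^ 9 * u t)) =O[ll] fun t => t ^ 9 := by
      have := ((isBigO_refl (fun t : ℝ => t ^ 9) ll).mul (contO u hu)).neg_left
      simpa using this
    have b2 : (fun t => r t * (f t - p t)) =O[ll] fun t => t ^ 9 := by
      simpa using (contO r hr).mul hf
    exact ((b1.sub b2).congr_left (fun t => (e t).symm))
  have : (fun t => (1 - f t * r t) * (f t)⁻¹) =O[ll] fun t => t ^ 9 := by
    simpa using key.mul (hinv.isBigO_one ℝ)
  unfold OK
  refine this.congr' ?_ (EventuallyEq.refl _ _)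
  filter_upwards [hne] with t ht
  field_simp

lemma OK_sqrt {a pa pw u : ℝ → ℝ} (ha : OK a pa) (hpa : Continuous pa)
    (hpa0 : 0 < pa 0) (hpw : Continuous pw) (hpw0 : 0 < pw 0) (hu : Continuous u)
    (he : ∀ t, pw t ^ 2 = pa t + t ^ 9 * u t) :
    OK (fun t => Real.sqrt (a t)) pw := by
  have hta : Filter.Tendsto a ll (nhds (pa 0)) := ha.tendsto hpa
  have hapos : ∀ᶠ t in ll, 0 < a t := hta.eventually (eventually_gt_nhds hpa0)
  have hsq : Filter.Tendsto (fun t => Real.sqrt (a t)) ll (nhds (Real.sqrt (pa 0))) :=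
    (Real.continuous_sqrt.tendsto _).comp hta
  have hden : Filter.Tendsto (fun t => Real.sqrt (a t) + pw t) ll
      (nhds (Real.sqrt (pa 0) + pw 0)) := hsq.add ((hpw.tendsto 0).mono_left ll_le)
  have hd0 : Real.sqrt (pa 0) + pw 0 ≠ 0 := by positivity
  have hdne : ∀ᶠ t in ll, Real.sqrt (a t) + pw t ≠ 0 := hden.eventually_ne hd0
  have hinv : Filter.Tendsto (fun t => (Real.sqrt (a t) + pw t)⁻¹) ll
      (nhds (Real.sqrt (pa 0) + pw 0)⁻¹) := hden.inv₀ hd0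
  have key : (fun t => a t - pw t ^ 2) =O[ll] fun t => t ^ 9 := by
    have e : ∀ t, a t - pw t ^ 2 = (a t - pa t) - t ^ 9 * u t := fun t => by
      rw [he t]; ring
    have b1 : (fun t : ℝ => t ^ 9 * u t) =O[ll] fun t => t ^ 9 := by
      simpa using (isBigO_refl (fun t : ℝ => t ^ 9) ll).mul (contO u hu)
    exact ((ha.sub b1).congr_left (fun t => (e t).symm))
  have : (fun t => (a t - pw t ^ 2) * (Real.sqrt (a t) + pw t)⁻¹) =O[ll]
      fun t => t ^ 9 := by simpa using key.mul (hinv.isBigO_one ℝ)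
  unfold OK
  refine this.congr' ?_ (EventuallyEq.refl _ _)
  filter_upwards [hapos, hdne] with t h1 h2
  have hs : Real.sqrt (a t) ^ 2 = a t := Real.sq_sqrt h1.le
  field_simp
  nlinarith [hs]
noncomputable def qfun (z : ℝ) : ℝ := (1 - 2 * z - Real.sqrt (1 - 4 * z)) / (2 * z)

noncomputable def Ffun (t : ℝ) : ℝ :=
  (1 + qfun t) * (1 + 5 * qfun t - qfun t ^ 2 - qfun t ^ 3 -
    (1 - qfun t) * Real.sqrt ((1 - qfun t ^ 2) * (1 - 4 * qfun t - qfun t ^ 2))) /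
  (8 * qfun t)

lemma ev_small : ∀ᶠ t in ll, |t| < 1/8 ∧ t ≠ 0 := by
  have h1 : ∀ᶠ t : ℝ in ll, |t| < 1/8 := by
    have : ∀ᶠ t : ℝ in nhds 0, |t| < 1/8 := by
      have := Metric.ball_mem_nhds (0:ℝ) (by norm_num : (0:ℝ) < 1/8)
      filter_upwards [this] with t ht
      simpa [Real.dist_eq] using ht
    exact this.filter_mono ll_le
  have h2 : ∀ᶠ t : ℝ in ll, t ≠ 0 := by
    have := self_mem_nhdsWithin (a := (0:ℝ)) (s := {(0:ℝ)}ᶜ)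
    exact this
  filter_upwards [h1, h2] with t ht hn using ⟨ht, hn⟩

lemma hq_eq : ∀ᶠ t in ll, qfun t = 2 * t * (1 - 2 * t + Real.sqrt (1 - 4 * t))⁻¹ := by
  filter_upwards [ev_small] with t ⟨ht, hn⟩
  have hb : -(1/8) < t ∧ t < 1/8 := abs_lt.mp ht
  have h4 : (0:ℝ) ≤ 1 - 4 * t := by linarith [hb.1, hb.2]
  have hs2 : Real.sqrt (1 - 4 * t) ^ 2 = 1 - 4 * t := Real.sq_sqrt h4
  have hsn : 0 ≤ Real.sqrt (1 - 4 * t) := Real.sqrt_nonneg _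
  have hd : (0:ℝ) < 1 - 2 * t + Real.sqrt (1 - 4 * t) := by linarith [hb.2]
  unfold qfun
  rw [div_eq_iff (mul_ne_zero two_ne_zero hn)]
  rw [show 2 * t * (1 - 2 * t + Real.sqrt (1 - 4 * t))⁻¹ * (2 * t) = (2 * t) * (2 * t) / (1 - 2 * t + Real.sqrt (1 - 4 * t)) by rw [div_eq_mul_inv]; ring, eq_div_iff hd.ne']
  nlinarith [hs2]

lemma n1 : OK (fun t => Real.sqrt (1 - 4 * t)) (fun t => (1) + (-2)*t + (-2)*t^2 + (-4)*t^3 + (-10)*t^4 + (-28)*t^5 + (-84)*t^6 + (-264)*t^7 + (-858)*t^8) :=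
  OK_sqrt (u := fun t => (5720) + (8008)*t + (16848)*t^2 + (39000)*t^3 + (92400)*t^4 + (213840)*t^5 + (453024)*t^6 + (736164)*t^7) (OK_poly (fun t => 1 - 4 * t)) (by fun_prop) (by norm_num) (by fun_prop) (by norm_num) (by fun_prop) (fun t => by ring)

lemma n2 : OK (fun t => 1 - 2 * t + Real.sqrt (1 - 4 * t)) (fun t => (2) + (-4)*t + (-2)*t^2 + (-4)*t^3 + (-10)*t^4 + (-28)*t^5 + (-84)*t^6 + (-264)*t^7 + (-858)*t^8) :=
  OK_congr (u := fun t => (0:ℝ)) (OK_add (OK_poly (fun t => 1 - 2 * t)) n1) (by fun_prop) (fun t => by ring)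

lemma n3 : OK (fun t => (1 - 2 * t + Real.sqrt (1 - 4 * t))⁻¹) (fun t => ((1)/2) + (1)*t + ((5)/2)*t^2 + (7)*t^3 + (21)*t^4 + (66)*t^5 + ((429)/2)*t^6 + (715)*t^7 + (2431)*t^8) :=
  OK_inv (u := fun t => (-15366) + (-17472)*t + (-39974)*t^2 + (-97790)*t^3 + (-241384)*t^4 + (-577005)*t^5 + (-1255254)*t^6 + (-2085798)*t^7) n2 (by fun_prop) (by norm_num) (by fun_prop) (by fun_prop) (fun t => by ring)

lemma n4 : OK (fun t => 2 * t * (1 - 2 * t + Real.sqrt (1 - 4 * t))⁻¹) (fun t => (1)*t + (2)*t^2 + (5)*t^3 + (14)*t^4 + (42)*t^5 + (132)*t^6 + (429)*t^7 + (1430)*t^8) :=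
  OK_mul (u := fun t => (4862)) (OK_poly (fun t => 2 * t)) n3 (by fun_prop) (by fun_prop) (by fun_prop) (fun t => by ring)

lemma n5 : OK (fun t => qfun t) (fun t => (1)*t + (2)*t^2 + (5)*t^3 + (14)*t^4 + (42)*t^5 + (132)*t^6 + (429)*t^7 + (1430)*t^8) :=
  OK_fcongr n4 hq_eq

lemma n6 : OK (fun t => qfun t ^ 2) (fun t => (1)*t^2 + (4)*t^3 + (14)*t^4 + (48)*t^5 + (165)*t^6 + (572)*t^7 + (2002)*t^8) :=
  OK_fcongr (OK_mul (u := fun t => (7072) + (15470)*t + (37400)*t^2 + (93500)*t^3 + (233376)*t^4 + (561561)*t^5 + (1226940)*t^6 + (2044900)*t^7) n5 n5 (by fun_prop) (by fun_prop) (by fun_prop) (fun t => by ring)) (Filter.Eventually.of_forall (fun t => by ring))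

lemma n7 : OK (fun t => qfun t ^ 3) (fun t => (1)*t^3 + (6)*t^4 + (27)*t^5 + (110)*t^6 + (429)*t^7 + (1638)*t^8) :=
  OK_fcongr (OK_mul (u := fun t => (6188) + (16184)*t + (43010)*t^2 + (114444)*t^3 + (299013)*t^4 + (745602)*t^5 + (1676818)*t^6 + (2862860)*t^7) n6 n5 (by fun_prop) (by fun_prop) (by fun_prop) (fun t => by ring)) (Filter.Eventually.of_forall (fun t => by ring))

lemma n8 : OK (fun t => 1 - qfun t ^ 2) (fun t => (1) + (-1)*t^2 + (-4)*t^3 + (-14)*t^4 + (-48)*t^5 + (-165)*t^6 + (-572)*t^7 + (-2002)*t^8) :=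
  OK_congr (u := fun t => (0:ℝ)) (OK_sub (OK_poly (fun t => (1:ℝ))) n6) (by fun_prop) (fun t => by ring)

lemma n9 : OK (fun t => 4 * qfun t) (fun t => (4)*t + (8)*t^2 + (20)*t^3 + (56)*t^4 + (168)*t^5 + (528)*t^6 + (1716)*t^7 + (5720)*t^8) :=
  OK_mul (u := fun t => (0:ℝ)) (OK_poly (fun t => (4:ℝ))) n5 (by fun_prop) (by fun_prop) (by fun_prop) (fun t => by ring)

lemma n10 : OK (fun t => 1 - 4 * qfun t - qfun t ^ 2) (fun t => (1) + (-4)*t + (-9)*t^2 + (-24)*t^3 + (-70)*t^4 + (-216)*t^5 + (-693)*t^6 + (-2288)*t^7 + (-7722)*t^8) :=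
  OK_congr (u := fun t => (0:ℝ)) (OK_sub (OK_sub (OK_poly (fun t => (1:ℝ))) n9) n6) (by fun_prop) (fun t => by ring)

lemma n11 : OK (fun t => (1 - qfun t ^ 2) * (1 - 4 * qfun t - qfun t ^ 2)) (fun t => (1) + (-4)*t + (-10)*t^2 + (-24)*t^3 + (-59)*t^4 + (-148)*t^5 + (-374)*t^6 + (-936)*t^7 + (-2262)*t^8) :=
  OK_mul (u := fun t => (28560) + (80240)*t + (219912)*t^2 + (595969)*t^3 + (1577004)*t^4 + (3970252)*t^5 + (8997560)*t^6 + (15459444)*t^7) n8 n10 (by fun_prop) (by fun_prop) (by fun_prop) (fun t => by ring)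

lemma n12 : OK (fun t => Real.sqrt ((1 - qfun t ^ 2) * (1 - 4 * qfun t - qfun t ^ 2))) (fun t => (1) + (-2)*t + (-7)*t^2 + (-26)*t^3 + (-106)*t^4 + (-468)*t^5 + (-2203)*t^6 + (-10906)*t^7 + (-56150)*t^8) :=
  OK_sqrt (u := fun t => (591056) + (2039272)*t + (7293880)*t^2 + (26965025)*t^3 + (100608236)*t^4 + (366337736)*t^5 + (1224743800)*t^6 + (3152822500)*t^7) n11 (by fun_prop) (by norm_num) (by fun_prop) (by norm_num) (by fun_prop) (fun t => by ring)

lemma n13 : OK (fun t => 5 * qfun t) (fun t => (5)*t + (10)*t^2 + (25)*t^3 + (70)*t^4 + (210)*t^5 + (660)*t^6 + (2145)*t^7 + (7150)*t^8) :=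
  OK_mul (u := fun t => (0:ℝ)) (OK_poly (fun t => (5:ℝ))) n5 (by fun_prop) (by fun_prop) (by fun_prop) (fun t => by ring)

lemma n14 : OK (fun t => 1 + 5 * qfun t - qfun t ^ 2 - qfun t ^ 3) (fun t => (1) + (5)*t + (9)*t^2 + (20)*t^3 + (50)*t^4 + (135)*t^5 + (385)*t^6 + (1144)*t^7 + (3510)*t^8) :=
  OK_congr (u := fun t => (0:ℝ)) (OK_sub (OK_sub (OK_add (OK_poly (fun t => (1:ℝ))) n13) n6) n7) (by fun_prop) (fun t => by ring)

lemma n15 : OK (fun t => 1 - qfun t) (fun t => (1) + (-1)*t + (-2)*t^2 + (-5)*t^3 + (-14)*t^4 + (-42)*t^5 + (-132)*t^6 + (-429)*t^7 + (-1430)*t^8) :=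
  OK_congr (u := fun t => (0:ℝ)) (OK_sub (OK_poly (fun t => (1:ℝ))) n5) (by fun_prop) (fun t => by ring)

lemma n16 : OK (fun t => (1 - qfun t) * Real.sqrt ((1 - qfun t ^ 2) * (1 - 4 * qfun t - qfun t ^ 2))) (fun t => (1) + (-3)*t + (-7)*t^2 + (-20)*t^3 + (-70)*t^4 + (-289)*t^5 + (-1343)*t^6 + (-6744)*t^7 + (-35570)*t^8) :=
  OK_mul (u := fun t => (109276) + (252484)*t + (670390)*t^2 + (1887300)*t^3 + (5412219)*t^4 + (15240764)*t^5 + (39683930)*t^6 + (80294500)*t^7) n15 n12 (by fun_prop) (by fun_prop) (by fun_prop) (fun t => by ring)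

lemma n17 : OK (fun t => 1 + 5 * qfun t - qfun t ^ 2 - qfun t ^ 3 + (1 - qfun t) * Real.sqrt ((1 - qfun t ^ 2) * (1 - 4 * qfun t - qfun t ^ 2))) (fun t => (2) + (2)*t + (2)*t^2 + (-20)*t^4 + (-154)*t^5 + (-958)*t^6 + (-5600)*t^7 + (-32060)*t^8) :=
  OK_congr (u := fun t => (0:ℝ)) (OK_add n14 n16) (by fun_prop) (fun t => by ring)


lemma hF_eq : ∀ᶠ t in ll, Ffun t =
    2 * ((1 + qfun t) * (1 + qfun t - qfun t ^ 2)) * (1 + 5 * qfun t - qfun t ^ 2 - qfun t ^ 3 + (1 - qfun t) * Real.sqrt ((1 - qfun t ^ 2) * (1 - 4 * qfun t - qfun t ^ 2)))⁻¹ := by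
  have hA : ∀ᶠ t in ll, 0 < (1 - qfun t ^ 2) * (1 - 4 * qfun t - qfun t ^ 2) :=
    (n11.tendsto (by fun_prop)).eventually (eventually_gt_nhds (by norm_num))
  have hD : ∀ᶠ t in ll, (1 + 5 * qfun t - qfun t ^ 2 - qfun t ^ 3 + (1 - qfun t) * Real.sqrt ((1 - qfun t ^ 2) * (1 - 4 * qfun t - qfun t ^ 2))) ≠ 0 :=
    (n17.tendsto (by fun_prop)).eventually_ne (by norm_num)
  filter_upwards [hA, hD, hq_eq, ev_small] with t h1 h2 h3 hsm
  obtain ⟨ht, hn⟩ := hsm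
  have hb : -(1/8) < t ∧ t < 1/8 := abs_lt.mp ht
  have hsn : 0 ≤ Real.sqrt (1 - 4 * t) := Real.sqrt_nonneg _
  have hdpos : (0:ℝ) < 1 - 2 * t + Real.sqrt (1 - 4 * t) := by linarith [hb.2]
  have hqne : qfun t ≠ 0 := by
    rw [h3]
    exact mul_ne_zero (mul_ne_zero two_ne_zero hn) (inv_ne_zero hdpos.ne')
  have hw2 : (Real.sqrt ((1 - qfun t ^ 2) * (1 - 4 * qfun t - qfun t ^ 2))) ^ 2 = (1 - qfun t ^ 2) * (1 - 4 * qfun t - qfun t ^ 2) := Real.sq_sqrt h1.le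
  have key : (1 + qfun t) * (1 + 5 * qfun t - qfun t ^ 2 - qfun t ^ 3 - (1 - qfun t) * Real.sqrt ((1 - qfun t ^ 2) * (1 - 4 * qfun t - qfun t ^ 2))) * (1 + 5 * qfun t - qfun t ^ 2 - qfun t ^ 3 + (1 - qfun t) * Real.sqrt ((1 - qfun t ^ 2) * (1 - 4 * qfun t - qfun t ^ 2))) =
      16 * qfun t * ((1 + qfun t) * (1 + qfun t - qfun t ^ 2)) := by
    linear_combination (-(1 + qfun t) * (1 - qfun t) ^ 2) * hw2
  have h5 : (1 + qfun t) * (1 + 5 * qfun t - qfun t ^ 2 - qfun t ^ 3 - (1 - qfun t) * Real.sqrt ((1 - qfun t ^ 2) * (1 - 4 * qfun t - qfun t ^ 2))) =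
      16 * qfun t * ((1 + qfun t) * (1 + qfun t - qfun t ^ 2)) * (1 + 5 * qfun t - qfun t ^ 2 - qfun t ^ 3 + (1 - qfun t) * Real.sqrt ((1 - qfun t ^ 2) * (1 - 4 * qfun t - qfun t ^ 2)))⁻¹ := by
    rw [← key, mul_inv_cancel_right₀ h2]
  unfold Ffun
  rw [div_eq_iff (mul_ne_zero (by norm_num) hqne), h5]
  field_simp
  ring

lemma n18 : OK (fun t => (1 + 5 * qfun t - qfun t ^ 2 - qfun t ^ 3 + (1 - qfun t) * Real.sqrt ((1 - qfun t ^ 2) * (1 - 4 * qfun t - qfun t ^ 2)))⁻¹) (fun t => ((1)/2) + ((-1)/2)*t + ((1)/2)*t^3 + ((9)/2)*t^4 + ((57)/2)*t^5 + (168)*t^6 + (969)*t^7 + ((11123)/2)*t^8) :=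
  OK_inv (u := fun t => (27349) + (-3737)*t + (-113785)*t^2 + (-725270)*t^3 + (-3639283)*t^4 + (-16140397)*t^5 + (-62210540)*t^6 + (-178301690)*t^7) n17 (by fun_prop) (by norm_num) (by fun_prop) (by fun_prop) (fun t => by ring)

lemma n19 : OK (fun t => 1 + qfun t) (fun t => (1) + (1)*t + (2)*t^2 + (5)*t^3 + (14)*t^4 + (42)*t^5 + (132)*t^6 + (429)*t^7 + (1430)*t^8) :=
  OK_congr (u := fun t => (0:ℝ)) (OK_add (OK_poly (fun t => (1:ℝ))) n5) (by fun_prop) (fun t => by ring)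

lemma n20 : OK (fun t => 1 + qfun t - qfun t ^ 2) (fun t => (1) + (1)*t + (1)*t^2 + (1)*t^3 + (-6)*t^5 + (-33)*t^6 + (-143)*t^7 + (-572)*t^8) :=
  OK_congr (u := fun t => (0:ℝ)) (OK_sub n19 n6) (by fun_prop) (fun t => by ring)

lemma n21 : OK (fun t => (1 + qfun t) * (1 + qfun t - qfun t ^ 2)) (fun t => (1) + (2)*t + (4)*t^2 + (9)*t^3 + (22)*t^4 + (57)*t^5 + (154)*t^6 + (429)*t^7 + (1222)*t^8) :=
  OK_mul (u := fun t => (884) + (-714)*t + (-5610)*t^2 + (-20944)*t^3 + (-65637)*t^4 + (-184041)*t^5 + (-449878)*t^6 + (-817960)*t^7) n19 n20 (by fun_prop) (by fun_prop) (by fun_prop) (fun t => by ring)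

lemma n22 : OK (fun t => 2 * ((1 + qfun t) * (1 + qfun t - qfun t ^ 2))) (fun t => (2) + (4)*t + (8)*t^2 + (18)*t^3 + (44)*t^4 + (114)*t^5 + (308)*t^6 + (858)*t^7 + (2444)*t^8) :=
  OK_mul (u := fun t => (0:ℝ)) (OK_poly (fun t => (2:ℝ))) n21 (by fun_prop) (by fun_prop) (by fun_prop) (fun t => by ring)

lemma n23 : OK (fun t => 2 * ((1 + qfun t) * (1 + qfun t - qfun t ^ 2)) * (1 + 5 * qfun t - qfun t ^ 2 - qfun t ^ 3 + (1 - qfun t) * Real.sqrt ((1 - qfun t ^ 2) * (1 - 4 * qfun t - qfun t ^ 2)))⁻¹) (fun t => (1) + (1)*t + (2)*t^2 + (6)*t^3 + (24)*t^4 + (114)*t^5 + (592)*t^6 + (3216)*t^7 + (17904)*t^8) :=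
  OK_mul (u := fun t => (33721) + (74390)*t + (175756)*t^2 + (442367)*t^3 + (1146261)*t^4 + (2954936)*t^5 + (7140003)*t^6 + (13592306)*t^7) n22 n18 (by fun_prop) (by fun_prop) (by fun_prop) (fun t => by ring)

lemma n24 : OK (fun t => Ffun t) (fun t => (1) + (1)*t + (2)*t^2 + (6)*t^3 + (24)*t^4 + (114)*t^5 + (592)*t^6 + (3216)*t^7 + (17904)*t^8) :=
  OK_fcongr n23 hF_eq

theorem stmt17 :
    (fun t : ℝ => Ffun t - (1 + t + 2 * t ^ 2 + 6 * t ^ 3 + 24 * t ^ 4 +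
        114 * t ^ 5 + 592 * t ^ 6 + 3216 * t ^ 7 + 17904 * t ^ 8))
      =O[nhdsWithin 0 {(0 : ℝ)}ᶜ] (fun t : ℝ => t ^ 9) := by
  have h := n24
  have e : (fun t : ℝ => Ffun t - (1 + t + 2 * t ^ 2 + 6 * t ^ 3 + 24 * t ^ 4 +
        114 * t ^ 5 + 592 * t ^ 6 + 3216 * t ^ 7 + 17904 * t ^ 8)) =
      (fun t : ℝ => Ffun t - ((1) + (1)*t + (2)*t^2 + (6)*t^3 + (24)*t^4 + (114)*t^5 +
        (592)*t^6 + (3216)*t^7 + (17904)*t^8)) := by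
    funext t; ring
  rw [e]
  exact h
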